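/- arXiv:2210.07019 — 2 statements merged into one kernel-verified Lean document; each statement's English description precedes it below -/
import Mathlib

section
/- Let μ be a finite Borel measure on ℝ^d whose Fourier transform μ̂ is α-Hölder for some α ∈ (0,1]. Then for all θ ∈ [0,1], dim_F^θ μ ≤ dim_F μ + d(1 + dim_F μ/(2α))·θ. In particular, θ ↦ dim_F^θ μ is Lipschitz continuous on [0,1]. -/
open MeasureTheory Filter Set
open scoped ENNReal NNReal

noncomputable section

abbrev Ed (d : ℕ) := EuclideanSpace ℝ (Fin d)

noncomputable def ftm {d : ℕ} (μ : Measure (Ed d)) (z : Ed d) : ℂ :=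
  ∫ x, Complex.exp (Complex.I * (-2 * Real.pi * (inner ℝ z x : ℝ))) ∂μ

noncomputable def energyJ {d : ℕ} (μ : Measure (Ed d)) (s θ : ℝ) : ℝ≥0∞ :=
  if θ = 0 then ⨆ z : Ed d, ENNReal.ofReal (‖ftm μ z‖ ^ 2 * ‖z‖ ^ s)
  else (∫⁻ z : Ed d, ENNReal.ofReal (‖ftm μ z‖ ^ (2 / θ) * ‖z‖ ^ (s / θ - d))) ^ θ

noncomputable def dimF {d : ℕ} (μ : Measure (Ed d)) (θ : ℝ) : ℝ≥0∞ :=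
  ⨆ (s : NNReal) (_ : energyJ μ s θ < ⊤), (s : ℝ≥0∞)

def sptm {d : ℕ} (μ : Measure (Ed d)) : Set (Ed d) := {x | ∀ r > 0, 0 < μ (Metric.ball x r)}

noncomputable def dimFS {d : ℕ} (X : Set (Ed d)) (θ : ℝ) : ℝ≥0∞ :=
  ⨆ (μ : Measure (Ed d)) (_ : IsFiniteMeasure μ) (_ : μ ≠ 0) (_ : sptm μ ⊆ X),
    min (dimF μ θ) (d : ℝ≥0∞)

section AuxiliaryLemmas
open Metric

noncomputable def aI {d : ℕ} (μ : Measure (Ed d)) (p q : ℝ) (z : Ed d) : ℝ≥0∞ :=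
  ENNReal.ofReal (‖ftm μ z‖ ^ p * ‖z‖ ^ q)

variable {d : ℕ} {μ : Measure (Ed d)} [IsFiniteMeasure μ]

theorem aI_meas (hc : Continuous (ftm μ)) (p q : ℝ) : Measurable (aI μ p q) := by
  apply ENNReal.measurable_ofReal.comp
  exact ((continuous_norm.comp hc).measurable.pow_const p).mul
    (measurable_norm.pow_const q)

theorem energy_lt_top_iff {s θ : ℝ} (hθ : 0 < θ) :
    energyJ μ s θ < ⊤ ↔ ∫⁻ z : Ed d, aI μ (2/θ) (s/θ - d) z < ⊤ := by
  rw [energyJ, if_neg hθ.ne', ENNReal.rpow_lt_top_iff_of_pos hθ]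
  rfl

theorem energy_zero_eq (s : ℝ) :
    energyJ μ s 0 = ⨆ z : Ed d, ENNReal.ofReal (‖ftm μ z‖ ^ 2 * ‖z‖ ^ s) := by
  rw [energyJ, if_pos rfl]

theorem sup_bound {s : ℝ} (h : energyJ μ s 0 < ⊤) (z : Ed d) :
    ‖ftm μ z‖ ^ 2 * ‖z‖ ^ s ≤ (energyJ μ s 0).toReal := by
  rcases le_or_gt (‖ftm μ z‖ ^ 2 * ‖z‖ ^ s) 0 with h0 | h0
  · exact h0.trans ENNReal.toReal_nonneg
  have hle : ENNReal.ofReal (‖ftm μ z‖ ^ 2 * ‖z‖ ^ s) ≤ energyJ μ s 0 := by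
    rw [energy_zero_eq]; exact le_iSup_of_le z le_rfl
  have := ENNReal.toReal_mono h.ne hle
  rwa [ENNReal.toReal_ofReal h0.le] at this

theorem ftm_abs_le (μ : Measure (Ed d)) [IsFiniteMeasure μ] (z : Ed d) :
    ‖ftm μ z‖ ≤ (μ univ).toReal := by
  have := norm_integral_le_of_norm_le_const (μ := μ)
    (f := fun x : Ed d => Complex.exp (Complex.I * (-2 * Real.pi * (inner ℝ z x : ℝ)))) (C := 1) ?_
  · simpa [ftm, measureReal_def] using this
  · refine Eventually.of_forall fun x => ?_
    rw [Complex.norm_exp]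
    simp [Complex.mul_re]

theorem energy_zero_zero : energyJ μ 0 0 < ⊤ := by
  rw [energy_zero_eq]
  refine lt_of_le_of_lt (iSup_le fun z => ?_)
    (ENNReal.ofReal_lt_top (r := (μ univ).toReal ^ 2))
  refine ENNReal.ofReal_le_ofReal ?_
  rw [Real.rpow_zero, mul_one]
  exact pow_le_pow_left₀ (norm_nonneg _) (ftm_abs_le μ z) 2


theorem lint_ball (hd : 1 ≤ d) {c : ℝ} (hc : -(d:ℝ) < c) :
    ∫⁻ z : Ed d in ball (0 : Ed d) 1, ENNReal.ofReal (‖z‖ ^ c) < ⊤ := by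
  haveI : Nonempty (Fin d) := ⟨⟨0, hd⟩⟩
  rcases le_or_gt 0 c with h0 | h0
  · calc ∫⁻ z : Ed d in ball (0 : Ed d) 1, ENNReal.ofReal (‖z‖ ^ c)
        ≤ ∫⁻ _ : Ed d in ball (0 : Ed d) 1, 1 := by
          refine setLIntegral_mono' measurableSet_ball fun z hz => ?_
          simpa using ENNReal.ofReal_le_ofReal
            (Real.rpow_le_one (norm_nonneg _) (le_of_lt (by simpa using mem_ball_iff_norm.mp hz)) h0)
      _ = volume (ball (0 : Ed d) 1) := by simp
      _ < ⊤ := measure_ball_lt_top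
  · have hc0 : c < 0 := h0
    have hmeas : Measurable fun z : Ed d => ‖z‖ ^ c := measurable_norm.pow_const c
    rw [lintegral_eq_lintegral_meas_le _ (Eventually.of_forall fun z => Real.rpow_nonneg (norm_nonneg _) c) hmeas.aemeasurable]
    have hsub : ∀ t : ℝ, 0 < t →
        {a : Ed d | t ≤ ‖a‖ ^ c} ⊆ closedBall (0 : Ed d) (t ^ c⁻¹) := by
      intro t ht a ha
      simp only [mem_setOf_eq] at ha
      have ha0 : a ≠ 0 := by
        rintro rfl
        rw [norm_zero, Real.zero_rpow hc0.ne] at ha; linarith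
      have hna : 0 < ‖a‖ := norm_pos_iff.mpr ha0
      rw [mem_closedBall_zero_iff]
      exact (Real.le_rpow_inv_iff_of_neg hna ht hc0).mpr ha
    calc ∫⁻ t in Ioi 0, (volume.restrict (ball (0:Ed d) 1)) {a : Ed d | t ≤ ‖a‖ ^ c}
        ≤ ∫⁻ t in Ioc 0 1 ∪ Ioi 1, (volume.restrict (ball (0:Ed d) 1)) {a : Ed d | t ≤ ‖a‖ ^ c} :=
          lintegral_mono_set Ioi_subset_Ioc_union_Ioi
      _ ≤ (∫⁻ t in Ioc 0 1, (volume.restrict (ball (0:Ed d) 1)) {a : Ed d | t ≤ ‖a‖ ^ c})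
          + ∫⁻ t in Ioi 1, (volume.restrict (ball (0:Ed d) 1)) {a : Ed d | t ≤ ‖a‖ ^ c} :=
          lintegral_union_le _ _ _
      _ < ⊤ := by
          refine ENNReal.add_lt_top.2 ⟨?_, ?_⟩
          · calc (∫⁻ _ in Ioc (0:ℝ) 1, (volume.restrict (ball (0:Ed d) 1)) {a : Ed d | _ ≤ ‖a‖ ^ c})
                ≤ ∫⁻ _ in Ioc (0:ℝ) 1, volume (ball (0:Ed d) 1) := by
                  refine setLIntegral_mono' measurableSet_Ioc fun t _ => ?_
                  exact (measure_mono (subset_univ _)).trans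
                    (le_of_eq (Measure.restrict_apply_univ _))
              _ = volume (ball (0:Ed d) 1) * volume (Ioc (0:ℝ) 1) := setLIntegral_const _ _
              _ < ⊤ := ENNReal.mul_lt_top measure_ball_lt_top (by simp)
          · have key : ∀ t : ℝ, t ∈ Ioi (1:ℝ) →
                (volume.restrict (ball (0:Ed d) 1)) {a : Ed d | t ≤ ‖a‖ ^ c}
                  ≤ ENNReal.ofReal (t ^ ((d:ℝ)/c)) * volume (ball (0:Ed d) 1) := by
              intro t ht
              have ht0 : (0:ℝ) < t := lt_trans one_pos ht
              calc (volume.restrict (ball (0:Ed d) 1)) {a : Ed d | t ≤ ‖a‖ ^ c}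
                  ≤ volume {a : Ed d | t ≤ ‖a‖ ^ c} := Measure.restrict_apply_le _ _
                _ ≤ volume (closedBall (0:Ed d) (t ^ c⁻¹)) := measure_mono (hsub t ht0)
                _ = ENNReal.ofReal ((t ^ c⁻¹) ^ Module.finrank ℝ (Ed d)) * volume (ball (0:Ed d) 1) :=
                    Measure.addHaar_closedBall _ _ (Real.rpow_nonneg ht0.le _)
                _ = ENNReal.ofReal (t ^ ((d:ℝ)/c)) * volume (ball (0:Ed d) 1) := by
                    rw [finrank_euclideanSpace_fin, ← Real.rpow_natCast (t ^ c⁻¹) d,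
                      ← Real.rpow_mul ht0.le]
                    ring_nf
            calc (∫⁻ t in Ioi (1:ℝ), (volume.restrict (ball (0:Ed d) 1)) {a : Ed d | t ≤ ‖a‖ ^ c})
                ≤ ∫⁻ t in Ioi (1:ℝ), ENNReal.ofReal (t ^ ((d:ℝ)/c)) * volume (ball (0:Ed d) 1) :=
                  setLIntegral_mono' measurableSet_Ioi key
              _ = (∫⁻ t in Ioi (1:ℝ), ENNReal.ofReal (t ^ ((d:ℝ)/c))) * volume (ball (0:Ed d) 1) :=
                  lintegral_mul_const' _ _ measure_ball_lt_top.ne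
              _ < ⊤ := by
                  refine ENNReal.mul_lt_top ?_ measure_ball_lt_top
                  have hdc : (d:ℝ)/c < -1 := by
                    rw [div_lt_iff_of_neg hc0]; push_cast; linarith
                  exact (integrableOn_Ioi_rpow_of_lt hdc one_pos).setLIntegral_lt_top

theorem lint_compl (hd : 1 ≤ d) {c : ℝ} (hc : c < -(d:ℝ)) :
    ∫⁻ z : Ed d in (ball (0 : Ed d) 1)ᶜ, ENNReal.ofReal (‖z‖ ^ c) < ⊤ := by
  have hd0 : (0:ℝ) < d := by exact_mod_cast hd
  have hc0 : c < 0 := by linarith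
  have hpt : ∀ z : Ed d, z ∈ (ball (0 : Ed d) 1)ᶜ →
      ENNReal.ofReal (‖z‖ ^ c) ≤ ENNReal.ofReal ((2:ℝ) ^ (-c)) * ENNReal.ofReal ((1 + ‖z‖) ^ (-(-c))) := by
    intro z hz
    have hz1 : (1:ℝ) ≤ ‖z‖ := by
      simpa using (mem_ball_iff_norm.not.mp hz)
    have h2 : (1 + ‖z‖) ≤ 2 * ‖z‖ := by linarith
    have hle : (1 + ‖z‖) ^ c ≥ (2 * ‖z‖) ^ c :=
      Real.rpow_le_rpow_of_nonpos (by linarith) h2 hc0.le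
    have hmul : (2 * ‖z‖) ^ c = 2 ^ c * ‖z‖ ^ c :=
      Real.mul_rpow (by norm_num) (by linarith)
    rw [← ENNReal.ofReal_mul (by positivity), neg_neg]
    apply ENNReal.ofReal_le_ofReal
    calc ‖z‖ ^ c = 2 ^ (-c) * (2 ^ c * ‖z‖ ^ c) := by
          rw [← mul_assoc, ← Real.rpow_add two_pos]; simp
      _ ≤ 2 ^ (-c) * (1 + ‖z‖) ^ c := by
          rw [← hmul]
          exact mul_le_mul_of_nonneg_left hle (by positivity)
  calc ∫⁻ z : Ed d in (ball (0 : Ed d) 1)ᶜ, ENNReal.ofReal (‖z‖ ^ c)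
      ≤ ∫⁻ z : Ed d in (ball (0 : Ed d) 1)ᶜ,
        ENNReal.ofReal ((2:ℝ) ^ (-c)) * ENNReal.ofReal ((1 + ‖z‖) ^ (-(-c))) :=
        setLIntegral_mono' measurableSet_ball.compl hpt
    _ ≤ ∫⁻ z : Ed d, ENNReal.ofReal ((2:ℝ) ^ (-c)) * ENNReal.ofReal ((1 + ‖z‖) ^ (-(-c))) :=
        setLIntegral_le_lintegral _ _
    _ = ENNReal.ofReal ((2:ℝ) ^ (-c)) * ∫⁻ z : Ed d, ENNReal.ofReal ((1 + ‖z‖) ^ (-(-c))) :=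
        lintegral_const_mul' _ _ ENNReal.ofReal_ne_top
    _ < ⊤ := by
        refine ENNReal.mul_lt_top ENNReal.ofReal_lt_top ?_
        refine finite_integral_one_add_norm ?_
        rw [finrank_euclideanSpace_fin]
        linarith

theorem ftm_cont (μ : Measure (Ed d)) {C α : ℝ} (hC : 0 < C) (hα : 0 < α)
    (h : ∀ x y : Ed d, ‖ftm μ x - ftm μ y‖ ≤ C * ‖x - y‖ ^ α) :
    Continuous (ftm μ) := by
  have : HolderWith C.toNNReal α.toNNReal (ftm μ) := by
    intro x y
    have hxy : edist (ftm μ x) (ftm μ y) = ENNReal.ofReal (‖ftm μ x - ftm μ y‖) := by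
      rw [edist_dist, Complex.dist_eq]
    rw [hxy]
    calc ENNReal.ofReal (‖ftm μ x - ftm μ y‖)
        ≤ ENNReal.ofReal (C * ‖x - y‖ ^ α) := ENNReal.ofReal_le_ofReal (h x y)
      _ = ENNReal.ofReal C * ENNReal.ofReal (‖x - y‖ ^ α) := by
          rw [ENNReal.ofReal_mul hC.le]
      _ = (C.toNNReal : ℝ≥0∞) * edist x y ^ (α.toNNReal : ℝ) := by
          rw [edist_dist, dist_eq_norm, ← ENNReal.ofReal_rpow_of_nonneg (norm_nonneg _) hα.le,
            ENNReal.ofReal]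
          congr 2
          simp [Real.coe_toNNReal _ hα.le]
  exact this.continuous (by simpa using hα)

theorem lemB (hd : 1 ≤ d) {θ s s' : ℝ} (hθ : 0 < θ)
    (hs' : 0 < s') (hss : s' < s) (h : energyJ μ s 0 < ⊤) : energyJ μ s' θ < ⊤ := by
  rw [energy_lt_top_iff hθ]
  set M := (μ univ).toReal with hMdef
  have hM0 : 0 ≤ M := ENNReal.toReal_nonneg
  set B := (energyJ μ s 0).toReal with hBdef
  have hB : ∀ z : Ed d, ‖ftm μ z‖ ^ 2 * ‖z‖ ^ s ≤ B := sup_bound h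
  have hB0 : 0 ≤ B := ENNReal.toReal_nonneg
  rw [← lintegral_add_compl _ (measurableSet_ball : MeasurableSet (ball (0:Ed d) 1))]
  refine ENNReal.add_lt_top.2 ⟨?_, ?_⟩
  · calc ∫⁻ z in ball (0:Ed d) 1, aI μ (2/θ) (s'/θ - d) z
        ≤ ∫⁻ z in ball (0:Ed d) 1,
            ENNReal.ofReal (M ^ (2/θ)) * ENNReal.ofReal (‖z‖ ^ (s'/θ - d)) := by
          refine setLIntegral_mono' measurableSet_ball fun z _ => ?_
          rw [aI, ← ENNReal.ofReal_mul (by positivity)]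
          refine ENNReal.ofReal_le_ofReal
            (mul_le_mul_of_nonneg_right ?_ (Real.rpow_nonneg (norm_nonneg _) _))
          exact Real.rpow_le_rpow (norm_nonneg _) (ftm_abs_le μ z) (by positivity)
      _ = ENNReal.ofReal (M ^ (2/θ)) *
            ∫⁻ z in ball (0:Ed d) 1, ENNReal.ofReal (‖z‖ ^ (s'/θ - d)) :=
          lintegral_const_mul' _ _ ENNReal.ofReal_ne_top
      _ < ⊤ := ENNReal.mul_lt_top ENNReal.ofReal_lt_top
          (lint_ball hd (by have := div_pos hs' hθ; linarith))
  · have key : ∀ z : Ed d, z ∈ (ball (0:Ed d) 1)ᶜ → aI μ (2/θ) (s'/θ - d) z ≤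
        ENNReal.ofReal (B ^ (1/θ)) * ENNReal.ofReal (‖z‖ ^ ((s'-s)/θ - d)) := by
      intro z hz
      have hz1 : (1:ℝ) ≤ ‖z‖ := by simpa using (mem_ball_iff_norm.not.mp hz)
      have hz0 : (0:ℝ) < ‖z‖ := lt_of_lt_of_le one_pos hz1
      set m := ‖ftm μ z‖ with hmdef
      have hm0 : 0 ≤ m := norm_nonneg _
      have h1 : m ^ 2 ≤ B * ‖z‖ ^ (-s) := by
        have hzs : (0:ℝ) < ‖z‖ ^ s := Real.rpow_pos_of_pos hz0 s
        rw [Real.rpow_neg hz0.le, ← div_eq_mul_inv, le_div_iff₀ hzs]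
        exact hB z
      have e1 : m ^ (2/θ) = (m ^ 2) ^ (1/θ) := by
        rw [← Real.rpow_natCast m 2, ← Real.rpow_mul hm0]
        congr 1
        push_cast
        ring
      have h2 : m ^ (2/θ) ≤ B ^ (1/θ) * ‖z‖ ^ (-(s * (1/θ))) := by
        rw [e1]
        calc (m ^ 2) ^ (1/θ) ≤ (B * ‖z‖ ^ (-s)) ^ (1/θ) :=
              Real.rpow_le_rpow (by positivity) h1 (by positivity)
          _ = B ^ (1/θ) * ‖z‖ ^ (-(s * (1/θ))) := by
              rw [Real.mul_rpow hB0 (Real.rpow_nonneg hz0.le _), ← Real.rpow_mul hz0.le]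
              ring_nf
      rw [aI, ← ENNReal.ofReal_mul (by positivity)]
      refine ENNReal.ofReal_le_ofReal ?_
      calc m ^ (2/θ) * ‖z‖ ^ (s'/θ - d)
          ≤ (B ^ (1/θ) * ‖z‖ ^ (-(s * (1/θ)))) * ‖z‖ ^ (s'/θ - d) :=
            mul_le_mul_of_nonneg_right h2 (Real.rpow_nonneg hz0.le _)
        _ = B ^ (1/θ) * ‖z‖ ^ ((s'-s)/θ - d) := by
            rw [mul_assoc, ← Real.rpow_add hz0,
              show (-(s * (1/θ)) + (s'/θ - d)) = (s'-s)/θ - d by ring]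
    calc ∫⁻ z in (ball (0:Ed d) 1)ᶜ, aI μ (2/θ) (s'/θ - d) z
        ≤ ∫⁻ z in (ball (0:Ed d) 1)ᶜ,
            ENNReal.ofReal (B ^ (1/θ)) * ENNReal.ofReal (‖z‖ ^ ((s'-s)/θ - d)) :=
          setLIntegral_mono' measurableSet_ball.compl key
      _ = ENNReal.ofReal (B ^ (1/θ)) *
            ∫⁻ z in (ball (0:Ed d) 1)ᶜ, ENNReal.ofReal (‖z‖ ^ ((s'-s)/θ - d)) :=
          lintegral_const_mul' _ _ ENNReal.ofReal_ne_top
      _ < ⊤ := by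
          refine ENNReal.mul_lt_top ENNReal.ofReal_lt_top (lint_compl hd ?_)
          have : (s' - s)/θ < 0 := div_neg_of_neg_of_pos (by linarith) hθ
          linarith

theorem ae_ne_zero (hd : 1 ≤ d) : ∀ᵐ z : Ed d ∂volume, z ≠ 0 := by
  haveI : Nonempty (Fin d) := ⟨⟨0, hd⟩⟩
  haveI : Nontrivial (Ed d) := inferInstance
  have h0 : volume {(0 : Ed d)} = 0 := measure_singleton 0
  have := measure_eq_zero_iff_ae_notMem.mp h0
  filter_upwards [this] with z hz
  simpa using hz

theorem lemC (hd : 1 ≤ d) {θ₁ lam s u : ℝ} (hθ₁ : 0 < θ₁) (hlam : 0 < lam) (hlam1 : lam < 1)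
    (hs : 0 ≤ s) (h0 : energyJ μ s 0 < ⊤)
    (h1 : ∫⁻ z : Ed d, aI μ (2/θ₁) (u/θ₁ - d) z < ⊤) :
    ∫⁻ z : Ed d, aI μ (2/(lam*θ₁)) (((1-lam)*s + lam*u)/(lam*θ₁) - d) z < ⊤ := by
  set B := (energyJ μ s 0).toReal with hBdef
  have hB : ∀ z : Ed d, ‖ftm μ z‖ ^ 2 * ‖z‖ ^ s ≤ B := sup_bound h0
  have hB0 : 0 ≤ B := ENNReal.toReal_nonneg
  set γ := (1-lam)/(lam*θ₁) with hγdef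
  have hγ : 0 < γ := div_pos (by linarith) (by positivity)
  have key : ∀ᵐ z : Ed d ∂volume, aI μ (2/(lam*θ₁)) (((1-lam)*s + lam*u)/(lam*θ₁) - d) z ≤
      ENNReal.ofReal (B ^ γ) * aI μ (2/θ₁) (u/θ₁ - d) z := by
    filter_upwards [ae_ne_zero hd] with z hzne
    have hz0 : (0:ℝ) < ‖z‖ := norm_pos_iff.mpr hzne
    set m := ‖ftm μ z‖ with hmdef
    rcases (norm_nonneg (ftm μ z)).eq_or_lt with hm | hm
    · have hm' : m = 0 := hm.symm
      have : m ^ (2/(lam*θ₁)) = 0 := by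
        rw [hm']; exact Real.zero_rpow (by positivity)
      rw [aI, ← hmdef, this, zero_mul, ENNReal.ofReal_zero]
      exact zero_le ..
    · have hm0 : 0 ≤ m := hm.le
      have hstep : (m ^ 2 * ‖z‖ ^ s) ^ γ ≤ B ^ γ :=
        Real.rpow_le_rpow (by positivity) (hB z) hγ.le
      have hexpand : (m ^ 2 * ‖z‖ ^ s) ^ γ = m ^ (2*γ) * ‖z‖ ^ (s*γ) := by
        rw [Real.mul_rpow (by positivity) (by positivity), ← Real.rpow_natCast m 2,
          ← Real.rpow_mul hm0, ← Real.rpow_mul hz0.le]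
        norm_num
      have hsplit : m ^ (2/(lam*θ₁)) * ‖z‖ ^ (((1-lam)*s + lam*u)/(lam*θ₁) - d) =
          (m ^ (2*γ) * ‖z‖ ^ (s*γ)) * (m ^ (2/θ₁) * ‖z‖ ^ (u/θ₁ - d)) := by
        rw [mul_mul_mul_comm, ← Real.rpow_add hm, ← Real.rpow_add hz0]
        congr 1
        · congr 1
          rw [hγdef]; field_simp; ring
        · congr 1
          rw [hγdef]; field_simp; ring
      rw [aI, aI, ← hmdef, ← ENNReal.ofReal_mul (by positivity), hsplit]
      rw [← hexpand]
      exact ENNReal.ofReal_le_ofReal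
        (mul_le_mul_of_nonneg_right hstep (by positivity))
  calc ∫⁻ z : Ed d, aI μ (2/(lam*θ₁)) (((1-lam)*s + lam*u)/(lam*θ₁) - d) z
      ≤ ∫⁻ z : Ed d, ENNReal.ofReal (B ^ γ) * aI μ (2/θ₁) (u/θ₁ - d) z :=
        lintegral_mono_ae key
    _ = ENNReal.ofReal (B ^ γ) * ∫⁻ z : Ed d, aI μ (2/θ₁) (u/θ₁ - d) z :=
        lintegral_const_mul' _ _ ENNReal.ofReal_ne_top
    _ < ⊤ := ENNReal.mul_lt_top ENNReal.ofReal_lt_top h1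

theorem ball_piece (hd : 1 ≤ d) {p c : ℝ} (hp : 0 ≤ p) (hcgt : -(d:ℝ) < c) :
    ∫⁻ z in ball (0:Ed d) 1, aI μ p c z < ⊤ := by
  set M := (μ univ).toReal with hMdef
  calc ∫⁻ z in ball (0:Ed d) 1, aI μ p c z
      ≤ ∫⁻ z in ball (0:Ed d) 1,
          ENNReal.ofReal (M ^ p) * ENNReal.ofReal (‖z‖ ^ c) := by
        refine setLIntegral_mono' measurableSet_ball fun z _ => ?_
        rw [aI, ← ENNReal.ofReal_mul (by positivity)]
        refine ENNReal.ofReal_le_ofReal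
          (mul_le_mul_of_nonneg_right ?_ (Real.rpow_nonneg (norm_nonneg _) _))
        exact Real.rpow_le_rpow (norm_nonneg _) (ftm_abs_le μ z) hp
    _ = ENNReal.ofReal (M ^ p) * ∫⁻ z in ball (0:Ed d) 1, ENNReal.ofReal (‖z‖ ^ c) :=
        lintegral_const_mul' _ _ ENNReal.ofReal_ne_top
    _ < ⊤ := ENNReal.mul_lt_top ENNReal.ofReal_lt_top (lint_ball hd hcgt)

theorem lemD (hd : 1 ≤ d) (hc : Continuous (ftm μ)) {θ₁ θ₂ s s' : ℝ} (hθ₁ : 0 < θ₁)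
    (h12 : θ₁ < θ₂) (hs' : 0 < s') (hss : s' < s)
    (hI : ∫⁻ z : Ed d, aI μ (2/θ₁) (s/θ₁ - d) z < ⊤) :
    ∫⁻ z : Ed d, aI μ (2/θ₂) (s'/θ₂ - d) z < ⊤ := by
  have hθ₂ : 0 < θ₂ := hθ₁.trans h12
  set lam := θ₁/θ₂ with hlamdef
  have hlam : 0 < lam := div_pos hθ₁ hθ₂
  have hlam1 : lam < 1 := (div_lt_one hθ₂).mpr h12
  have hne1 : θ₁ ≠ 0 := hθ₁.ne'
  have hne2 : θ₂ ≠ 0 := hθ₂.ne'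
  have hne3 : 1 - lam ≠ 0 := by linarith
  have hne4 : θ₂ - θ₁ ≠ 0 := sub_ne_zero.mpr h12.ne'
  set e := (s'-s)/θ₂ - (d:ℝ)*(1-lam) with hedef
  set F := aI μ (2/θ₁) (s/θ₁ - d) with hFdef
  set w := fun z : Ed d => ENNReal.ofReal (‖z‖ ^ e) with hwdef
  rw [← lintegral_add_compl _ (measurableSet_ball : MeasurableSet (ball (0:Ed d) 1))]
  refine ENNReal.add_lt_top.2 ⟨ball_piece hd (by positivity)
    (by have := div_pos hs' hθ₂; linarith), ?_⟩
  have hptwise : ∀ z : Ed d, z ∈ (ball (0:Ed d) 1)ᶜ →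
      aI μ (2/θ₂) (s'/θ₂ - d) z = (F z) ^ lam * w z := by
    intro z hz
    have hz1 : (1:ℝ) ≤ ‖z‖ := by simpa using (mem_ball_iff_norm.not.mp hz)
    have hz0 : (0:ℝ) < ‖z‖ := lt_of_lt_of_le one_pos hz1
    set m := ‖ftm μ z‖ with hmdef
    have hm0 : 0 ≤ m := norm_nonneg _
    rw [hFdef, hwdef, aI, aI, ← hmdef,
      ENNReal.ofReal_rpow_of_nonneg (by positivity) hlam.le,
      ← ENNReal.ofReal_mul (by positivity)]
    congr 1
    rw [Real.mul_rpow (by positivity) (by positivity)]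
    rcases hm0.eq_or_lt with hm | hm
    · rw [← hm, Real.zero_rpow (by positivity : (0:ℝ) < 2/θ₂).ne',
        Real.zero_rpow (by positivity : (0:ℝ) < 2/θ₁).ne',
        Real.zero_rpow hlam.ne', zero_mul, zero_mul, zero_mul]
    · rw [← Real.rpow_mul hm.le, ← Real.rpow_mul hz0.le, mul_assoc, ← Real.rpow_add hz0]
      congr 1
      · congr 1
        rw [hlamdef]
        field_simp
      · congr 1
        rw [hedef, hlamdef]
        field_simp
        ring
  have hFm : Measurable F := aI_meas hc _ _
  have hwm : Measurable w := ENNReal.measurable_ofReal.comp (measurable_norm.pow_const e)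
  have hpq : (1/lam).HolderConjugate (1/(1-lam)) :=
    Real.holderConjugate_one_div hlam (by linarith) (by ring)
  calc ∫⁻ z in (ball (0:Ed d) 1)ᶜ, aI μ (2/θ₂) (s'/θ₂ - d) z
      = ∫⁻ z in (ball (0:Ed d) 1)ᶜ, ((fun z => (F z) ^ lam) * w) z :=
        setLIntegral_congr_fun measurableSet_ball.compl
          (fun z hz => hptwise z hz)
    _ ≤ (∫⁻ z in (ball (0:Ed d) 1)ᶜ, ((F z) ^ lam) ^ (1/lam)) ^ (1/(1/lam)) *
        (∫⁻ z in (ball (0:Ed d) 1)ᶜ, (w z) ^ (1/(1-lam))) ^ (1/(1/(1-lam))) :=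
        ENNReal.lintegral_mul_le_Lp_mul_Lq _ hpq
          ((hFm.pow_const lam).aemeasurable) (hwm.aemeasurable)
    _ < ⊤ := by
        refine ENNReal.mul_lt_top ?_ ?_
        · refine ENNReal.rpow_lt_top_of_nonneg
            (one_div_nonneg.mpr (one_div_nonneg.mpr hlam.le)) ?_
          have : ∀ z : Ed d, ((F z) ^ lam) ^ (1/lam) = F z := by
            intro z
            rw [← ENNReal.rpow_mul, mul_one_div, div_self hlam.ne', ENNReal.rpow_one]
          simp_rw [this]
          exact ((setLIntegral_le_lintegral _ _).trans_lt hI).ne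
        · refine ENNReal.rpow_lt_top_of_nonneg
            (one_div_nonneg.mpr (one_div_nonneg.mpr (by linarith))) ?_
          have hwq : ∀ z : Ed d, (w z) ^ (1/(1-lam)) = ENNReal.ofReal (‖z‖ ^ (e * (1/(1-lam)))) := by
            intro z
            rw [hwdef, ENNReal.ofReal_rpow_of_nonneg (Real.rpow_nonneg (norm_nonneg _) _)
              (one_div_nonneg.mpr (by linarith)), ← Real.rpow_mul (norm_nonneg _)]
          simp_rw [hwq]
          refine (lint_compl hd ?_).ne
          have he : e * (1/(1-lam)) = (s'-s)/(θ₂*(1-lam)) - d := by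
            rw [hedef, hlamdef]
            field_simp
          rw [he]
          have : (s'-s)/(θ₂*(1-lam)) < 0 :=
            div_neg_of_neg_of_pos (by linarith) (mul_pos hθ₂ (by linarith))
          linarith

theorem lemA (hd : 1 ≤ d) {C α : ℝ} (hC : 0 < C) (hα : 0 < α) (hα1 : α ≤ 1)
    (hH : ∀ x y : Ed d, ‖ftm μ x - ftm μ y‖ ≤ C * ‖x - y‖ ^ α)
    {θ s : ℝ} (hθ : 0 < θ) (hs : 0 ≤ s)
    (h : ∫⁻ z : Ed d, aI μ (2/θ) (s/θ - (d:ℝ)) z < ⊤) :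
    ∃ s' : ℝ, 0 ≤ s' ∧ energyJ μ s' 0 < ⊤ ∧ s - d*θ ≤ s' * (1 + d*θ/(2*α)) := by
  haveI : Nonempty (Fin d) := ⟨⟨0, hd⟩⟩
  haveI : Nontrivial (Ed d) := inferInstance
  have hd0 : (0:ℝ) < d := by exact_mod_cast hd
  rcases le_or_gt s ((d:ℝ)*θ) with hcase | hcase
  · refine ⟨0, le_rfl, energy_zero_zero, ?_⟩
    rw [zero_mul]
    linarith
  -- main case
  set M := (μ univ).toReal with hMdef
  have hM0 : 0 ≤ M := ENNReal.toReal_nonneg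
  set p := 2/θ with hpdef
  have hp : 0 < p := by positivity
  set q := s/θ - (d:ℝ) with hqdef
  have hq : 0 < q := by
    rw [hqdef, sub_pos]
    exact (lt_div_iff₀ hθ).mpr (by linarith)
  have hβne : (0:ℝ) < 2/θ + (d:ℝ)/α := by positivity
  set β := p + (d:ℝ)/α with hβdef
  have hβ : 0 < β := by rw [hβdef, hpdef]; positivity
  set s' := 2*q/β with hs'def
  have hs'pos : 0 < s' := by rw [hs'def]; positivity
  set V := volume (ball (0:Ed d) 1) with hVdef
  have hV0 : 0 < V := measure_ball_pos volume _ one_pos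
  have hVt : V < ⊤ := measure_ball_lt_top
  set A := max (2*C) M with hAdef
  have hApos : 0 < A := lt_of_lt_of_le (by positivity) (le_max_left _ _)
  -- Key lower bound on the integral
  have key : ∀ z : Ed d, 2 ≤ ‖z‖ →
      ENNReal.ofReal ((‖ftm μ z‖/2) ^ p * (‖z‖/2) ^ q *
        ((min (‖ftm μ z‖) (2*C))/(2*C)) ^ (α⁻¹ * (d:ℝ))) * V
        ≤ ∫⁻ w : Ed d, aI μ p q w := by
    intro z hz2
    set m := ‖ftm μ z‖ with hmdef
    have hmnn : 0 ≤ m := by rw [hmdef]; exact norm_nonneg _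
    rcases hmnn.eq_or_lt with hm | hm
    · have hmin : min m (2*C) = 0 := by rw [← hm]; exact min_eq_left (by positivity)
      rw [hmin, zero_div, Real.zero_rpow (by positivity : (0:ℝ) < α⁻¹ * (d:ℝ)).ne',
        mul_zero, ENNReal.ofReal_zero, zero_mul]
      exact zero_le ..
    · set m' := min m (2*C) with hm'def
      have hm'pos : 0 < m' := lt_min hm (by positivity)
      have hm'le : m' ≤ 2*C := min_le_right _ _
      have hm'lem : m' ≤ m := min_le_left _ _
      set r := (m'/(2*C)) ^ (α⁻¹) with hrdef
      have hr0 : 0 < r := Real.rpow_pos_of_pos (by positivity) _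
      have hr1 : r ≤ 1 :=
        Real.rpow_le_one (by positivity) ((div_le_one (by positivity)).mpr hm'le)
          (by positivity)
      have hrα : r ^ α = m'/(2*C) := by
        rw [hrdef, ← Real.rpow_mul (by positivity), inv_mul_cancel₀ hα.ne', Real.rpow_one]
      have hball : ∀ w : Ed d, w ∈ ball z r →
          m/2 ≤ ‖ftm μ w‖ ∧ ‖z‖/2 ≤ ‖w‖ := by
        intro w hw
        have hdist : ‖z - w‖ ≤ r := by
          have := mem_ball.mp hw
          rw [dist_comm] at this
          rw [← dist_eq_norm]
          exact this.le
        have h1 : m - ‖ftm μ w‖ ≤ C * ‖z - w‖ ^ α := by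
          refine le_trans ?_ (hH z w)
          have := norm_sub_norm_le (ftm μ z) (ftm μ w)
          simpa using this
        have h2 : C * ‖z - w‖ ^ α ≤ C * r ^ α :=
          mul_le_mul_of_nonneg_left
            (Real.rpow_le_rpow (norm_nonneg _) hdist hα.le) hC.le
        have h3 : C * (m'/(2*C)) = m'/2 := by field_simp
        have habs : m/2 ≤ ‖ftm μ w‖ := by
          rw [hrα, h3] at h2
          linarith
        have hnorm : ‖z‖/2 ≤ ‖w‖ := by
          have := norm_sub_norm_le z w
          linarith
        exact ⟨habs, hnorm⟩
      have hvol : volume (ball z r) = ENNReal.ofReal ((m'/(2*C)) ^ (α⁻¹ * (d:ℝ))) * V := by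
        rw [Measure.addHaar_ball volume z hr0.le, finrank_euclideanSpace_fin, hVdef]
        congr 1
        rw [← Real.rpow_natCast r d, hrdef, ← Real.rpow_mul (by positivity)]
      calc ENNReal.ofReal ((m/2) ^ p * (‖z‖/2) ^ q * (m'/(2*C)) ^ (α⁻¹ * (d:ℝ))) * V
          = ENNReal.ofReal ((m/2) ^ p * (‖z‖/2) ^ q) * volume (ball z r) := by
            rw [hvol, ENNReal.ofReal_mul (mul_nonneg
              (Real.rpow_nonneg (div_nonneg hmnn (by norm_num)) _)
              (Real.rpow_nonneg (by positivity) _)), mul_assoc]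
        _ = ∫⁻ _ in ball z r, ENNReal.ofReal ((m/2) ^ p * (‖z‖/2) ^ q) :=
            (setLIntegral_const _ _).symm
        _ ≤ ∫⁻ w in ball z r, aI μ p q w := by
            refine setLIntegral_mono' measurableSet_ball fun w hw => ?_
            obtain ⟨h1, h2⟩ := hball w hw
            rw [aI]
            refine ENNReal.ofReal_le_ofReal (mul_le_mul ?_ ?_ (by positivity)
              (Real.rpow_nonneg (norm_nonneg _) _))
            · exact Real.rpow_le_rpow (by positivity) h1 hp.le
            · exact Real.rpow_le_rpow (by positivity) h2 hq.le
        _ ≤ ∫⁻ w : Ed d, aI μ p q w := setLIntegral_le_lintegral _ _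
  set K₀ := ((∫⁻ w : Ed d, aI μ p q w) / V).toReal with hK₀def
  have hK0 : 0 ≤ K₀ := ENNReal.toReal_nonneg
  have hXle : ∀ z : Ed d, 2 ≤ ‖z‖ →
      (‖ftm μ z‖/2) ^ p * (‖z‖/2) ^ q *
        ((min (‖ftm μ z‖) (2*C))/(2*C)) ^ (α⁻¹ * (d:ℝ)) ≤ K₀ := by
    intro z hz
    have hk := key z hz
    have h1 : ENNReal.ofReal ((‖ftm μ z‖/2) ^ p * (‖z‖/2) ^ q *
        ((min (‖ftm μ z‖) (2*C))/(2*C)) ^ (α⁻¹ * (d:ℝ)))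
        ≤ (∫⁻ w : Ed d, aI μ p q w) / V :=
      (ENNReal.le_div_iff_mul_le (Or.inl hV0.ne') (Or.inl hVt.ne)).mpr hk
    have hX0 : 0 ≤ (‖ftm μ z‖/2) ^ p * (‖z‖/2) ^ q *
        ((min (‖ftm μ z‖) (2*C))/(2*C)) ^ (α⁻¹ * (d:ℝ)) := by
      refine mul_nonneg (mul_nonneg ?_ ?_) ?_
      · exact Real.rpow_nonneg (by positivity) _
      · exact Real.rpow_nonneg (by positivity) _
      · exact Real.rpow_nonneg (div_nonneg (le_min (norm_nonneg _) (by positivity))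
          (by positivity)) _
    have h2 := ENNReal.toReal_mono (ENNReal.div_lt_top h.ne hV0.ne').ne h1
    rwa [ENNReal.toReal_ofReal hX0] at h2
  set K₁ := K₀ * ((2:ℝ)^p * (2:ℝ)^q * A^(α⁻¹ * (d:ℝ))) with hK₁def
  have hK₁0 : 0 ≤ K₁ := mul_nonneg hK0 (by positivity)
  have hβ0 : β ≠ 0 := hβ.ne'
  have claim2 : ∀ z : Ed d, 2 ≤ ‖z‖ →
      (‖ftm μ z‖^2 * ‖z‖^s')^(β/2) ≤ K₁ := by
    intro z hz
    set m := ‖ftm μ z‖ with hmdef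
    have hmnn : 0 ≤ m := by rw [hmdef]; exact norm_nonneg _
    rcases hmnn.eq_or_lt with hm | hm
    · rw [← hm]
      norm_num
      rw [Real.zero_rpow (by positivity : (0:ℝ) < β/2).ne']
      exact hK₁0
    · have e1 : (m^2 * ‖z‖^s')^(β/2) = m^(2*(β/2)) * ‖z‖^(s' * (β/2)) := by
        rw [Real.mul_rpow (by positivity) (Real.rpow_nonneg (norm_nonneg _) _),
          ← Real.rpow_natCast m 2, ← Real.rpow_mul hm.le, ← Real.rpow_mul (norm_nonneg _)]
        norm_num
      have e1' : m^(2*(β/2)) = m^β := by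
        congr 1
        ring
      have e2 : s' * (β/2) = q := by rw [hs'def]; field_simp
      have e3 : m^β = m^p * m^(α⁻¹ * (d:ℝ)) := by
        rw [hβdef, div_eq_inv_mul, Real.rpow_add hm]
      have hmM : m ≤ M := by rw [hmdef, hMdef]; exact ftm_abs_le μ z
      have hm2 : m ≤ A * (min m (2*C)/(2*C)) := by
        rcases le_total m (2*C) with hmc | hmc
        · rw [min_eq_left hmc, mul_div_assoc', le_div_iff₀ (by positivity)]
          nlinarith [mul_le_mul_of_nonneg_right (le_max_left (2*C) M) hm.le]
        · rw [min_eq_right hmc, div_self (by positivity : (0:ℝ) < 2*C).ne', mul_one]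
          exact hmM.trans (le_max_right _ _)
      have hminnn : (0:ℝ) ≤ min m (2*C)/(2*C) :=
        div_nonneg (le_min hmnn (by positivity)) (by positivity)
      have hfrac : m^(α⁻¹ * (d:ℝ)) ≤ A^(α⁻¹ * (d:ℝ)) * ((min m (2*C))/(2*C))^(α⁻¹ * (d:ℝ)) := by
        rw [← Real.mul_rpow hApos.le hminnn]
        exact Real.rpow_le_rpow hmnn hm2 (by positivity)
      calc (m^2*‖z‖^s')^(β/2) = m^p * m^(α⁻¹ * (d:ℝ)) * ‖z‖^q := by
            rw [e1, e1', e2, e3]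
        _ ≤ m^p * (A^(α⁻¹ * (d:ℝ)) * ((min m (2*C))/(2*C))^(α⁻¹ * (d:ℝ))) * ‖z‖^q := by
            refine mul_le_mul_of_nonneg_right
              (mul_le_mul_of_nonneg_left hfrac (Real.rpow_nonneg hmnn _))
              (Real.rpow_nonneg (norm_nonneg _) _)
        _ = ((2:ℝ)^p * (2:ℝ)^q * A^(α⁻¹ * (d:ℝ))) *
              ((m/2)^p * (‖z‖/2)^q * ((min m (2*C))/(2*C))^(α⁻¹ * (d:ℝ))) := by
            rw [Real.div_rpow hmnn (by norm_num), Real.div_rpow (norm_nonneg z) (by norm_num)]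
            have h2p : (0:ℝ) < (2:ℝ)^p := Real.rpow_pos_of_pos two_pos p
            have h2q : (0:ℝ) < (2:ℝ)^q := Real.rpow_pos_of_pos two_pos q
            field_simp
        _ ≤ ((2:ℝ)^p * (2:ℝ)^q * A^(α⁻¹ * (d:ℝ))) * K₀ :=
            mul_le_mul_of_nonneg_left (hXle z hz) (by positivity)
        _ = K₁ := by rw [hK₁def]; ring
  have claim3 : ∀ z : Ed d, 2 ≤ ‖z‖ →
      ‖ftm μ z‖^2 * ‖z‖^s' ≤ K₁^(2/β) := by
    intro z hz
    have hY : (0:ℝ) ≤ ‖ftm μ z‖^2 * ‖z‖^s' := by positivity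
    calc ‖ftm μ z‖^2 * ‖z‖^s'
        = ((‖ftm μ z‖^2 * ‖z‖^s')^(β/2))^(2/β) := by
          rw [← Real.rpow_mul hY, show β/2*(2/β) = 1 by field_simp, Real.rpow_one]
      _ ≤ K₁^(2/β) := Real.rpow_le_rpow (Real.rpow_nonneg hY _) (claim2 z hz) (by positivity)
  have claim4 : ∀ z : Ed d, ‖z‖ < 2 →
      ‖ftm μ z‖^2 * ‖z‖^s' ≤ M^2 * (2:ℝ)^s' := by
    intro z hz
    have h1 : ‖ftm μ z‖^2 ≤ M^2 :=
      pow_le_pow_left₀ (norm_nonneg _) (ftm_abs_le μ z) 2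
    have h2 : ‖z‖^s' ≤ (2:ℝ)^s' := Real.rpow_le_rpow (norm_nonneg _) hz.le hs'pos.le
    exact mul_le_mul h1 h2 (Real.rpow_nonneg (norm_nonneg _) _) (by positivity)
  refine ⟨s', hs'pos.le, ?_, ?_⟩
  · rw [energy_zero_eq]
    refine lt_of_le_of_lt (iSup_le fun z => ?_)
      (ENNReal.ofReal_lt_top (r := max (K₁^(2/β)) (M^2 * (2:ℝ)^s')))
    refine ENNReal.ofReal_le_ofReal ?_
    rcases le_or_gt 2 ‖z‖ with hz | hz
    · exact (claim3 z hz).trans (le_max_left _ _)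
    · exact (claim4 z hz).trans (le_max_right _ _)
  · have hfin : s' * (1 + (d:ℝ)*θ/(2*α)) = s - (d:ℝ)*θ := by
      have hne : 2/θ + (d:ℝ)/α ≠ 0 := hβne.ne'
      rw [hs'def, hqdef, hβdef, hpdef]
      field_simp
    linarith [hfin]

theorem le_dimF {θ : ℝ} {u : NNReal} (h : energyJ μ ↑u θ < ⊤) : (u:ℝ≥0∞) ≤ dimF μ θ :=
  le_iSup₂ (f := fun (s : NNReal) (_ : energyJ μ ↑s θ < ⊤) => (s:ℝ≥0∞)) u h

theorem mono0_dim (hd : 1 ≤ d) {θ : ℝ} (hθ : 0 < θ) : dimF μ 0 ≤ dimF μ θ := by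
  refine iSup₂_le fun u hu => ?_
  by_contra hcon
  push_neg at hcon
  obtain ⟨v, hv1, hv2⟩ := ENNReal.lt_iff_exists_nnreal_btwn.mp hcon
  have hv0' : (0:ℝ≥0∞) < (v:ℝ≥0∞) := lt_of_le_of_lt (zero_le ..) hv1
  have hv0 : (0:ℝ) < v := by exact_mod_cast hv0'
  have hvu : (v:ℝ) < (u:ℝ) := by exact_mod_cast hv2
  have hE := lemB hd (θ := θ) hθ hv0 hvu hu
  exact absurd (le_dimF hE) (not_le.mpr hv1)

theorem monoD_dim (hd : 1 ≤ d) (hc : Continuous (ftm μ)) {θ₁ θ₂ : ℝ} (hθ₁ : 0 < θ₁)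
    (h12 : θ₁ < θ₂) : dimF μ θ₁ ≤ dimF μ θ₂ := by
  have hθ₂ : 0 < θ₂ := hθ₁.trans h12
  refine iSup₂_le fun u hu => ?_
  by_contra hcon
  push_neg at hcon
  obtain ⟨v, hv1, hv2⟩ := ENNReal.lt_iff_exists_nnreal_btwn.mp hcon
  have hv0' : (0:ℝ≥0∞) < (v:ℝ≥0∞) := lt_of_le_of_lt (zero_le ..) hv1
  have hv0 : (0:ℝ) < v := by exact_mod_cast hv0'
  have hvu : (v:ℝ) < (u:ℝ) := by exact_mod_cast hv2
  have hE := lemD hd hc hθ₁ h12 hv0 hvu ((energy_lt_top_iff hθ₁).mp hu)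
  exact absurd (le_dimF ((energy_lt_top_iff hθ₂).mpr hE)) (not_le.mpr hv1)

theorem mono_dim_full (hd : 1 ≤ d) (hc : Continuous (ftm μ)) {θ₁ θ₂ : ℝ} (hθ₁ : 0 ≤ θ₁)
    (h12 : θ₁ ≤ θ₂) : dimF μ θ₁ ≤ dimF μ θ₂ := by
  rcases eq_or_lt_of_le h12 with h | h
  · rw [h]
  rcases eq_or_lt_of_le hθ₁ with h0 | h0
  · rw [← h0]
    exact mono0_dim hd (lt_of_le_of_lt hθ₁ h)
  · exact monoD_dim hd hc h0 h

theorem lemA' (hd : 1 ≤ d) {C α : ℝ} (hC : 0 < C) (hα : 0 < α) (hα1 : α ≤ 1)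
    (hH : ∀ x y : Ed d, ‖ftm μ x - ftm μ y‖ ≤ C * ‖x - y‖ ^ α)
    (hT : dimF μ 0 ≠ ⊤) {θ : ℝ} (hθ : 0 < θ) {u : NNReal} (hu : energyJ μ ↑u θ < ⊤) :
    (u:ℝ) ≤ (dimF μ 0).toReal + ((d:ℝ)*(1+(dimF μ 0).toReal/(2*α)))*θ := by
  set t := (dimF μ 0).toReal with htdef
  obtain ⟨s', hs'0, hs'E, hs'ineq⟩ :=
    lemA hd hC hα hα1 hH hθ u.coe_nonneg ((energy_lt_top_iff hθ).mp hu)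
  have h1 : ((s'.toNNReal : ℝ≥0) : ℝ≥0∞) ≤ dimF μ 0 :=
    le_dimF (by rwa [Real.coe_toNNReal _ hs'0])
  have h2' : ((s'.toNNReal : ℝ≥0∞)).toReal ≤ t := ENNReal.toReal_mono hT h1
  rw [ENNReal.coe_toReal, Real.coe_toNNReal _ hs'0] at h2'
  have h4 : s'*(1 + (d:ℝ)*θ/(2*α)) ≤ t*(1 + (d:ℝ)*θ/(2*α)) :=
    mul_le_mul_of_nonneg_right h2' (by positivity)
  have h5 : t*(1 + (d:ℝ)*θ/(2*α)) + (d:ℝ)*θ = t + ((d:ℝ)*(1+t/(2*α)))*θ := by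
    field_simp
    ring
  linarith [hs'ineq]

theorem Abound (hd : 1 ≤ d) {C α : ℝ} (hC : 0 < C) (hα : 0 < α) (hα1 : α ≤ 1)
    (hH : ∀ x y : Ed d, ‖ftm μ x - ftm μ y‖ ≤ C * ‖x - y‖ ^ α)
    (hT : dimF μ 0 ≠ ⊤) {θ : ℝ} (hθ : 0 < θ) :
    dimF μ θ ≤ ENNReal.ofReal ((dimF μ 0).toReal +
      ((d:ℝ)*(1+(dimF μ 0).toReal/(2*α)))*θ) := by
  refine iSup₂_le fun u hu => ?_
  have := lemA' hd hC hα hα1 hH hT hθ hu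
  calc ((u:ℝ≥0):ℝ≥0∞) = ENNReal.ofReal u := (ENNReal.ofReal_coe_nnreal (p := u)).symm
    _ ≤ _ := ENNReal.ofReal_le_ofReal this


end AuxiliaryLemmas

section AuxiliaryLemmas2
open Metric

theorem hconv {d : ℕ} {μ : Measure (Ed d)} {α θ : ℝ} (hα : 0 < α) (hθ0 : 0 ≤ θ)
    (hT : dimF μ 0 ≠ ⊤) :
    ENNReal.ofReal ((dimF μ 0).toReal + ((d:ℝ)*(1+(dimF μ 0).toReal/(2*α)))*θ)
      = dimF μ 0 + (d : ℝ≥0∞) * (1 + dimF μ 0 / ENNReal.ofReal (2 * α)) *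
        ENNReal.ofReal θ := by
  set t := (dimF μ 0).toReal with htdef
  have ht0 : 0 ≤ t := ENNReal.toReal_nonneg
  rw [ENNReal.ofReal_add ht0 (by positivity), ENNReal.ofReal_toReal hT]
  congr 1
  rw [ENNReal.ofReal_mul (by positivity : (0:ℝ) ≤ (d:ℝ)*(1+t/(2*α)))]
  congr 1
  rw [ENNReal.ofReal_mul (by positivity : (0:ℝ) ≤ (d:ℝ))]
  congr 1
  · exact ENNReal.ofReal_natCast d
  · rw [ENNReal.ofReal_add zero_le_one (by positivity), ENNReal.ofReal_one,
      ENNReal.ofReal_div_of_pos (by positivity), ENNReal.ofReal_toReal hT]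


end AuxiliaryLemmas2

/-- If the Fourier transform of a finite Borel measure `μ` on `ℝ^d`
is `α`-Hölder, then `dim_F^θ μ ≤ dim_F μ + d(1 + dim_F μ/(2α))θ` for all `θ ∈ [0,1]`;
in particular `θ ↦ dim_F^θ μ` is Lipschitz continuous on `[0,1]`. -/
theorem statement2 {d : ℕ} (hd : 1 ≤ d) (μ : Measure (Ed d)) [IsFiniteMeasure μ]
    (α : ℝ) (hα : α ∈ Set.Ioc (0:ℝ) 1)
    (hHolder : ∃ C : ℝ, 0 < C ∧ ∀ x y : Ed d,
      ‖ftm μ x - ftm μ y‖ ≤ C * ‖x - y‖ ^ α) :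
    (∀ θ ∈ Set.Icc (0:ℝ) 1,
      dimF μ θ ≤ dimF μ 0 + (d : ℝ≥0∞) * (1 + dimF μ 0 / ENNReal.ofReal (2 * α)) *
        ENNReal.ofReal θ) ∧
    ∃ L : ℝ≥0, ∀ θ₁ ∈ Set.Icc (0:ℝ) 1, ∀ θ₂ ∈ Set.Icc (0:ℝ) 1,
      dimF μ θ₁ ≤ dimF μ θ₂ + (L : ℝ≥0∞) * ENNReal.ofReal |θ₁ - θ₂| := by
  obtain ⟨C, hC, hH⟩ := hHolder
  obtain ⟨hα0, hα1⟩ := hα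
  have hc : Continuous (ftm μ) := ftm_cont μ hC hα0 hH
  by_cases hT : dimF μ 0 = ⊤
  · constructor
    · intro θ _
      rw [hT]
      simp [top_add]
    · refine ⟨0, fun θ₁ hθ₁ θ₂ hθ₂ => ?_⟩
      have h2 : dimF μ θ₂ = ⊤ := by
        rcases eq_or_lt_of_le hθ₂.1 with h0 | h0
        · rw [← h0, hT]
        · exact top_le_iff.mp (hT ▸ mono0_dim hd h0)
      rw [h2]
      simp
  · set t := (dimF μ 0).toReal with htdef
    have ht0 : 0 ≤ t := ENNReal.toReal_nonneg
    constructor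
    · intro θ hθ
      rcases eq_or_lt_of_le hθ.1 with h0 | h0
      · rw [← h0]
        simp
      · calc dimF μ θ ≤ ENNReal.ofReal (t + ((d:ℝ)*(1+t/(2*α)))*θ) :=
              Abound hd hC hα0 hα1 hH hT h0
          _ = _ := hconv hα0 hθ.1 hT
    · set K := (d:ℝ)*(1+t/(2*α)) with hKdef
      have hK0 : 0 ≤ K := by positivity
      refine ⟨K.toNNReal, fun θ₁ hθ₁ θ₂ hθ₂ => ?_⟩
      have hLcoe : ((K.toNNReal : ℝ≥0) : ℝ≥0∞) = ENNReal.ofReal K := rfl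
      rcases le_or_gt θ₁ θ₂ with hle | hlt
      · exact (mono_dim_full hd hc hθ₁.1 hle).trans le_self_add
      · have hθ₁pos : 0 < θ₁ := lt_of_le_of_lt hθ₂.1 hlt
        have habs : |θ₁ - θ₂| = θ₁ - θ₂ := abs_of_pos (by linarith)
        rw [habs, hLcoe]
        rcases eq_or_lt_of_le hθ₂.1 with h0 | hθ₂pos
        · rw [← h0, sub_zero]
          refine iSup₂_le fun u hu => ?_
          have hule : (u:ℝ) ≤ t + K*θ₁ := by
            have := lemA' hd hC hα0 hα1 hH hT hθ₁pos hu
            rw [hKdef]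
            linarith
          calc ((u:ℝ≥0):ℝ≥0∞) = ENNReal.ofReal u := (ENNReal.ofReal_coe_nnreal (p := u)).symm
            _ ≤ ENNReal.ofReal (t + K*θ₁) := ENNReal.ofReal_le_ofReal hule
            _ = ENNReal.ofReal t + ENNReal.ofReal (K*θ₁) :=
                ENNReal.ofReal_add ht0 (by positivity)
            _ = dimF μ 0 + ENNReal.ofReal K * ENNReal.ofReal θ₁ := by
                rw [ENNReal.ofReal_toReal hT, ENNReal.ofReal_mul hK0]
        · refine iSup₂_le fun u hu => ?_
          refine ENNReal.le_of_forall_pos_le_add fun ε hε _ => ?_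
          obtain ⟨σ, hσE, hσge⟩ : ∃ σ : NNReal, energyJ μ ↑σ 0 < ⊤ ∧ t - (ε:ℝ) ≤ σ := by
            by_cases hcase : t - (ε:ℝ) ≤ 0
            · exact ⟨0, energy_zero_zero, by simpa using hcase⟩
            · push_neg at hcase
              have h1 : ENNReal.ofReal (t - ε) < dimF μ 0 := by
                conv_rhs => rw [← ENNReal.ofReal_toReal hT]
                exact (ENNReal.ofReal_lt_ofReal_iff_of_nonneg hcase.le).mpr
                  (by have : (0:ℝ) < ε := hε; linarith)
              rw [dimF] at h1
              simp only [lt_iSup_iff] at h1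
              obtain ⟨σ, hσE, hσlt⟩ := h1
              refine ⟨σ, hσE, ?_⟩
              rw [← ENNReal.ofReal_coe_nnreal] at hσlt
              exact ((ENNReal.ofReal_lt_ofReal_iff_of_nonneg hcase.le).mp hσlt).le
          set lam := θ₂/θ₁ with hlamdef
          have hlam : 0 < lam := div_pos hθ₂pos hθ₁pos
          have hlam1 : lam < 1 := (div_lt_one hθ₁pos).mpr hlt
          have hprod : lam * θ₁ = θ₂ := by
            rw [hlamdef]
            field_simp
          have hC2 := lemC hd (θ₁ := θ₁) (lam := lam) (s := (σ:ℝ)) (u := (u:ℝ))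
            hθ₁pos hlam hlam1 σ.coe_nonneg hσE ((energy_lt_top_iff hθ₁pos).mp hu)
          set v := (1-lam)*(σ:ℝ) + lam*(u:ℝ) with hvdef
          have hv0 : 0 ≤ v := add_nonneg (mul_nonneg (by linarith) σ.coe_nonneg)
            (mul_nonneg hlam.le u.coe_nonneg)
          have hvE : energyJ μ v θ₂ < ⊤ := by
            rw [← hprod]
            exact (energy_lt_top_iff (by rw [hprod]; exact hθ₂pos)).mpr hC2
          have hvdim : ENNReal.ofReal v ≤ dimF μ θ₂ := by
            have h6 := le_dimF (θ := θ₂) (u := v.toNNReal)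
              (by rwa [Real.coe_toNNReal _ hv0])
            have h7 : ENNReal.ofReal v = ((v.toNNReal : ℝ≥0) : ℝ≥0∞) := rfl
            rwa [h7]
          have huK : (u:ℝ) ≤ t + K*θ₁ := by
            have := lemA' hd hC hα0 hα1 hH hT hθ₁pos hu
            rw [hKdef]
            linarith
          have h9 : (1-lam)*θ₁ = θ₁ - θ₂ := by
            rw [hlamdef]
            field_simp
          have hreal : (u:ℝ) ≤ v + (K*(θ₁-θ₂) + ε) := by
            have h5 : (u:ℝ) - v = (1-lam)*((u:ℝ) - σ) := by rw [hvdef]; ring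
            have h6 : (1-lam)*((u:ℝ)-σ) ≤ (1-lam)*((u:ℝ)-t+ε) :=
              mul_le_mul_of_nonneg_left (by linarith) (by linarith)
            have h7 : (1-lam)*((u:ℝ)-t+ε) ≤ (1-lam)*(K*θ₁+ε) :=
              mul_le_mul_of_nonneg_left (by linarith) (by linarith)
            have h8 : (1-lam)*(K*θ₁+ε) ≤ K*(θ₁-θ₂) + ε := by
              have hee : (0:ℝ) ≤ ε := ε.coe_nonneg
              calc (1-lam)*(K*θ₁+ε) = K*((1-lam)*θ₁) + (1-lam)*(ε:ℝ) := by ring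
                _ ≤ K*(θ₁-θ₂) + ε := by
                    rw [h9]
                    have : (1-lam)*(ε:ℝ) ≤ ε := by nlinarith
                    linarith
            linarith
          calc ((u:ℝ≥0):ℝ≥0∞) = ENNReal.ofReal u := (ENNReal.ofReal_coe_nnreal (p := u)).symm
            _ ≤ ENNReal.ofReal (v + (K*(θ₁-θ₂) + ε)) := ENNReal.ofReal_le_ofReal hreal
            _ = ENNReal.ofReal v + ENNReal.ofReal (K*(θ₁-θ₂) + ε) :=
                ENNReal.ofReal_add hv0
                  (add_nonneg (mul_nonneg hK0 (by linarith)) ε.coe_nonneg)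
            _ ≤ dimF μ θ₂ + (ENNReal.ofReal (K*(θ₁-θ₂)) + ENNReal.ofReal ε) := by
                refine add_le_add hvdim (le_of_eq ?_)
                exact ENNReal.ofReal_add (mul_nonneg hK0 (by linarith)) ε.coe_nonneg
            _ = dimF μ θ₂ + ENNReal.ofReal K * ENNReal.ofReal (θ₁-θ₂) + ε := by
                rw [ENNReal.ofReal_mul hK0, ENNReal.ofReal_coe_nnreal, add_assoc]


end
end

section
/- Let μ be a finite Borel measure on ℝ^d whose Fourier transform μ̂ is α-Hölder for some α ∈ (0,1]. Then the Sobolev dimension satisfies dim_S μ ≤ (1 + d/(2α))·dim_F μ + d. In particular, if dim_F μ = 0 then dim_S μ ≤ d. -/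
open MeasureTheory Filter Set
open scoped ENNReal NNReal

noncomputable section

lemma ftm_bound {d : ℕ} (μ : Measure (Ed d)) [IsFiniteMeasure μ] (z : Ed d) :
    ‖ftm μ z‖ ≤ (μ Set.univ).toReal := by
  have h : ‖∫ x, Complex.exp (Complex.I * (-2 * Real.pi * (inner ℝ z x : ℝ))) ∂μ‖
      ≤ 1 * (μ Set.univ).toReal := by
    apply norm_integral_le_of_norm_le_const
    filter_upwards with x
    rw [Complex.norm_exp]
    simp
  simpa [ftm] using h

/-- If the Fourier transform of a finite Borel measure `μ` on `ℝ^d`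
is `α`-Hölder, then the Sobolev dimension satisfies
`dim_S μ ≤ (1 + d/(2α))·dim_F μ + d`; in particular `dim_F μ = 0 → dim_S μ ≤ d`. -/
theorem statement4 {d : ℕ} (hd : 1 ≤ d) (μ : Measure (Ed d)) [IsFiniteMeasure μ]
    (α : ℝ) (hα : α ∈ Set.Ioc (0:ℝ) 1)
    (hHolder : ∃ C : ℝ, 0 < C ∧ ∀ x y : Ed d,
      ‖ftm μ x - ftm μ y‖ ≤ C * ‖x - y‖ ^ α) :
    dimF μ 1 ≤ (1 + ENNReal.ofReal ((d : ℝ) / (2 * α))) * dimF μ 0 + (d : ℝ≥0∞) ∧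
    (dimF μ 0 = 0 → dimF μ 1 ≤ (d : ℝ≥0∞)) := by
  obtain ⟨C, hC, hHC⟩ := hHolder
  obtain ⟨hα0, hα1⟩ := hα
  have key : ∀ s : NNReal, energyJ μ (s:ℝ) 1 < ⊤ →
      (s : ℝ≥0∞) ≤ (1 + ENNReal.ofReal ((d : ℝ) / (2 * α))) * dimF μ 0 + (d : ℝ≥0∞) := by
    intro s hs
    by_cases hsd : (s:ℝ) ≤ (d:ℝ)
    · calc (s:ℝ≥0∞) = ENNReal.ofReal (s:ℝ) := ENNReal.ofReal_coe_nnreal.symm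
        _ ≤ ENNReal.ofReal (d:ℝ) := ENNReal.ofReal_le_ofReal hsd
        _ = (d:ℝ≥0∞) := ENNReal.ofReal_natCast d
        _ ≤ _ := le_add_self
    · push_neg at hsd
      set sR := (s:ℝ) with hsR
      -- extract finiteness of the Sobolev integral
      set f : Ed d → ℝ≥0∞ :=
        fun z => ENNReal.ofReal (‖ftm μ z‖ ^ (2:ℝ) * ‖z‖ ^ (sR - (d:ℝ))) with hf
      have hJ : (∫⁻ z : Ed d, f z) < ⊤ := by
        simp only [energyJ, one_ne_zero, if_false, ENNReal.rpow_one, div_one] at hs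
        simpa [hf] using hs
      set J := ∫⁻ z : Ed d, f z with hJdef
      set M0 := (μ Set.univ).toReal with hM0def
      have hM0 : 0 ≤ M0 := ENNReal.toReal_nonneg
      have h2αd : (0:ℝ) < 2*α + d := by positivity
      set p : ℝ := 2*α/(2*α + d) with hpdef
      have hp0 : 0 < p := by positivity
      set t : ℝ := (sR - d) * p with htdef
      have ht0 : 0 ≤ t := by
        apply mul_nonneg (by linarith) hp0.le
      set V := volume (Metric.ball (0 : Ed d) 1) with hVdef
      have hV0 : V ≠ 0 := (Metric.measure_ball_pos volume 0 one_pos).ne'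
      have hVtop : V ≠ ⊤ := measure_ball_lt_top.ne
      set Vr := V.toReal with hVr
      have hVrpos : 0 < Vr := ENNReal.toReal_pos hV0 hVtop
      set Jr := J.toReal with hJr
      set K := Jr / Vr with hKdef
      have hK0 : 0 ≤ K := div_nonneg ENNReal.toReal_nonneg hVrpos.le
      set A : ℝ := 4 * 2^(sR - d) * (2*C)^((d:ℝ)/α) * K with hAdef
      have hA0 : 0 ≤ A := by positivity
      set R₀ : ℝ := max 1 (2 * (M0/(2*C))^(1/α)) with hR₀def
      have hR₀1 : (1:ℝ) ≤ R₀ := le_max_left _ _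
      set M : ℝ := max (M0^(2:ℝ) * R₀^t) (A^p) with hMdef
      have hM : 0 ≤ M := le_trans (Real.rpow_nonneg hA0 p) (le_max_right _ _)
      -- the pointwise decay claim
      have claim : ∀ z : Ed d, ‖ftm μ z‖ ^ (2:ℝ) * ‖z‖ ^ t ≤ M := by
        intro z
        set m := ‖ftm μ z‖ with hmdef
        set R := ‖z‖ with hRdef
        have hm0 : 0 ≤ m := norm_nonneg _
        have hR0 : 0 ≤ R := norm_nonneg _
        by_cases hR : R ≤ R₀
        · refine le_trans ?_ (le_max_left _ _)
          apply mul_le_mul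
          · exact Real.rpow_le_rpow hm0 (ftm_bound μ z) (by norm_num)
          · exact Real.rpow_le_rpow hR0 hR ht0
          · exact Real.rpow_nonneg hR0 t
          · exact Real.rpow_nonneg hM0 2
        · push_neg at hR
          have hR1 : (1:ℝ) < R := lt_of_le_of_lt hR₀1 hR
          have hRpos : (0:ℝ) < R := by linarith
          by_cases hm : m = 0
          · rw [hm, Real.zero_rpow (by norm_num), zero_mul]; exact hM
          · have hmpos : 0 < m := lt_of_le_of_ne hm0 (Ne.symm hm)
            set r : ℝ := (m/(2*C))^(1/α) with hrdef
            have hrpos : 0 < r := Real.rpow_pos_of_pos (by positivity) _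
            have hrR : r ≤ R/2 := by
              have h1 : r ≤ (M0/(2*C))^(1/α) := by
                apply Real.rpow_le_rpow (by positivity) ?_ (by positivity)
                apply div_le_div_of_nonneg_right ?_ (by positivity)
                · exact ftm_bound μ z
              have h2 : 2 * (M0/(2*C))^(1/α) ≤ R₀ := le_max_right _ _
              linarith
            have hCr : C * r^α = m/2 := by
              rw [hrdef, ← Real.rpow_mul (by positivity), one_div_mul_cancel hα0.ne',
                Real.rpow_one]
              field_simp
            have hball : ∀ w ∈ Metric.ball z r,
                ENNReal.ofReal ((m/2)^(2:ℝ) * (R/2)^(sR - (d:ℝ))) ≤ f w := by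
              intro w hw
              have hdist : ‖z - w‖ < r := by
                rw [Metric.mem_ball, dist_eq_norm] at hw
                rwa [norm_sub_rev]
              have h1 : ‖ftm μ z - ftm μ w‖ ≤ m/2 := by
                refine (hHC z w).trans ?_
                rw [← hCr]
                exact mul_le_mul_of_nonneg_left
                  (Real.rpow_le_rpow (norm_nonneg _) hdist.le hα0.le) hC.le
              have h2 : m/2 ≤ ‖ftm μ w‖ := by
                have h3 : m - ‖ftm μ w‖ ≤ ‖ftm μ z - ftm μ w‖ := by
                  simpa [hmdef] using
                    norm_sub_norm_le (ftm μ z) (ftm μ w)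
                linarith
              have h4 : R/2 ≤ ‖w‖ := by
                have h5 : ‖z‖ - ‖w‖ ≤ ‖z - w‖ := norm_sub_norm_le z w
                have h6 : R - ‖w‖ ≤ ‖z - w‖ := by rw [hRdef]; exact h5
                linarith [hdist.le, hrR]
              apply ENNReal.ofReal_le_ofReal
              apply mul_le_mul
              · exact Real.rpow_le_rpow (by linarith) h2 (by norm_num)
              · exact Real.rpow_le_rpow (by linarith) h4 (by linarith)
              · exact Real.rpow_nonneg (by linarith) _
              · exact Real.rpow_nonneg (norm_nonneg _) _
            set c : ℝ≥0∞ := ENNReal.ofReal ((m/2)^(2:ℝ) * (R/2)^(sR - (d:ℝ))) with hcdef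
            have hint : c * volume (Metric.ball z r) ≤ J := by
              calc c * volume (Metric.ball z r)
                  = ∫⁻ _ in Metric.ball z r, c ∂volume := (setLIntegral_const _ _).symm
                _ = ∫⁻ w, (Metric.ball z r).indicator (fun _ => c) w :=
                    (lintegral_indicator Metric.isOpen_ball.measurableSet _).symm
                _ ≤ ∫⁻ w, f w := by
                    apply lintegral_mono
                    intro w
                    by_cases hw : w ∈ Metric.ball z r
                    · simpa [Set.indicator_of_mem hw] using hball w hw
                    · simp [Set.indicator_of_notMem hw]
                _ = J := rfl
            have hvol : volume (Metric.ball z r) = ENNReal.ofReal (r ^ d) * V := by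
              rw [Measure.addHaar_ball_of_pos volume z hrpos, finrank_euclideanSpace_fin]
            have hcnn : 0 ≤ (m/2)^(2:ℝ) * (R/2)^(sR - (d:ℝ)) :=
              mul_nonneg (Real.rpow_nonneg (by linarith) _) (Real.rpow_nonneg (by linarith) _)
            have hreal : ((m/2)^(2:ℝ) * (R/2)^(sR - (d:ℝ))) * r ^ d ≤ K := by
              have h2 : ENNReal.ofReal (((m/2)^(2:ℝ) * (R/2)^(sR - (d:ℝ))) * r^d) * V ≤ J := by
                rw [ENNReal.ofReal_mul hcnn, mul_assoc, ← hvol]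
                exact hint
              have h3 := ENNReal.toReal_mono hJ.ne h2
              rw [ENNReal.toReal_mul, ENNReal.toReal_ofReal
                (mul_nonneg hcnn (pow_nonneg hrpos.le d))] at h3
              rw [hKdef]
              exact (le_div_iff₀ hVrpos).mpr h3
            have h24 : (2:ℝ)^(2:ℝ) = 4 := by
              rw [Real.rpow_two]; norm_num
            have e3 : (r:ℝ)^d = m^((d:ℝ)/α) / (2*C)^((d:ℝ)/α) := by
              rw [← Real.rpow_natCast r d, hrdef, ← Real.rpow_mul (by positivity),
                Real.div_rpow hmpos.le (by positivity)]
              rw [one_div, inv_mul_eq_div]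
            have heq : ((m/2)^(2:ℝ) * (R/2)^(sR - (d:ℝ))) * r ^ d
                = (m^((2:ℝ)+(d:ℝ)/α) * R^(sR - (d:ℝ)))
                  / (4 * 2^(sR - (d:ℝ)) * (2*C)^((d:ℝ)/α)) := by
              rw [Real.rpow_add hmpos, e3, Real.div_rpow hm0 two_pos.le,
                Real.div_rpow hR0 two_pos.le, h24]
              have hv : (0:ℝ) < 2^(sR - (d:ℝ)) := Real.rpow_pos_of_pos two_pos _
              have hw : (0:ℝ) < (2*C)^((d:ℝ)/α) := Real.rpow_pos_of_pos (by linarith) _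
              field_simp
            rw [heq] at hreal
            have halg : m^((2:ℝ)+(d:ℝ)/α) * R^(sR - (d:ℝ)) ≤ A := by
              have hv : (0:ℝ) < 2^(sR - (d:ℝ)) := Real.rpow_pos_of_pos two_pos _
              have hw : (0:ℝ) < (2*C)^((d:ℝ)/α) := Real.rpow_pos_of_pos (by linarith) _
              rw [div_le_iff₀ (by positivity)] at hreal
              calc m^((2:ℝ)+(d:ℝ)/α) * R^(sR - (d:ℝ))
                  ≤ K * (4 * 2^(sR - (d:ℝ)) * (2*C)^((d:ℝ)/α)) := hreal
                _ = A := by rw [hAdef]; ring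
            have hfin : m^(2:ℝ) * R^t ≤ A^p := by
              have h := Real.rpow_le_rpow
                (mul_nonneg (Real.rpow_nonneg hm0 _) (Real.rpow_nonneg hR0 _)) halg hp0.le
              rw [Real.mul_rpow (Real.rpow_nonneg hm0 _) (Real.rpow_nonneg hR0 _),
                ← Real.rpow_mul hm0, ← Real.rpow_mul hR0] at h
              have hqe : ((2:ℝ)+(d:ℝ)/α) * p = 2 := by
                rw [hpdef]
                field_simp
              rw [hqe, ← htdef] at h
              exact h
            exact le_trans hfin (le_max_right _ _)
      -- from the pointwise decay, the θ = 0 energy at exponent t is finite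
      have hE0 : energyJ μ ((t.toNNReal : NNReal) : ℝ) 0 < ⊤ := by
        rw [energyJ, if_pos rfl]
        have hle : (⨆ z : Ed d, ENNReal.ofReal
            (‖ftm μ z‖ ^ 2 * ‖z‖ ^ ((t.toNNReal : NNReal) : ℝ)))
            ≤ ENNReal.ofReal M := by
          refine iSup_le fun z => ENNReal.ofReal_le_ofReal ?_
          have hz := claim z
          rw [Real.coe_toNNReal t ht0]
          calc ‖ftm μ z‖ ^ 2 * ‖z‖ ^ t
              = ‖ftm μ z‖ ^ (2:ℝ) * ‖z‖ ^ t := by rw [Real.rpow_two]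
            _ ≤ M := hz
        exact lt_of_le_of_lt hle ENNReal.ofReal_lt_top
      have hdim0 : ENNReal.ofReal t ≤ dimF μ 0 := by
        have h : ((t.toNNReal : NNReal) : ℝ≥0∞)
            ≤ ⨆ (s' : NNReal) (_ : energyJ μ (s':ℝ) 0 < ⊤), (s' : ℝ≥0∞) :=
          le_iSup₂ (f := fun (s' : NNReal) (_ : energyJ μ (s':ℝ) 0 < ⊤) => (s' : ℝ≥0∞))
            t.toNNReal hE0
        exact h
      calc (s:ℝ≥0∞) = ENNReal.ofReal sR := ENNReal.ofReal_coe_nnreal.symm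
        _ = ENNReal.ofReal ((sR - (d:ℝ)) + (d:ℝ)) := by rw [sub_add_cancel]
        _ = ENNReal.ofReal (sR - (d:ℝ)) + ENNReal.ofReal ((d:ℝ)) :=
            ENNReal.ofReal_add (by linarith) (by positivity)
        _ = ENNReal.ofReal ((1 + (d:ℝ)/(2*α)) * t) + (d:ℝ≥0∞) := by
            have hteq : (1 + (d:ℝ)/(2*α)) * t = sR - (d:ℝ) := by
              rw [htdef, hpdef]
              field_simp
            rw [ENNReal.ofReal_natCast, hteq]
        _ = (1 + ENNReal.ofReal ((d:ℝ)/(2*α))) * ENNReal.ofReal t + (d:ℝ≥0∞) := by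
            rw [ENNReal.ofReal_mul (by positivity), ENNReal.ofReal_add one_pos.le (by positivity),
              ENNReal.ofReal_one]
        _ ≤ _ := add_le_add_left (mul_le_mul_right hdim0 _) _
  constructor
  · exact iSup₂_le key
  · intro h0
    have h := iSup₂_le key
    rw [h0, mul_zero, zero_add] at h
    exact h

end
end
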